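/- Let ζ : ℝ → ℝ be continuously differentiable with ζ(σ₀) = 0 for some σ₀ ∈ ℝ, and suppose ζ(σ) ≠ 0 for all σ ≠ σ₀ in some neighbourhood of σ₀. Fix τ ∈ ℝ and define, for σ with ζ(σ) ≠ 0, Δ(σ) = -ζ'(σ)/ζ(σ)² + cosh(ζ(σ)τ)·(1 + ζ'(σ)/ζ(σ)²). Then Δ(σ) → 1 + (1/2) ζ'(σ₀) τ² as σ → σ₀ (through σ ≠ σ₀). -/

import Mathlib

open Filter Topology

lemma sinh_div_tendsto : Tendsto (fun x : ℝ => Real.sinh x / x) (𝓝[≠] 0) (𝓝 1) := by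
  have h := hasDerivAt_iff_tendsto_slope.mp (Real.hasDerivAt_sinh 0)
  rw [Real.cosh_zero] at h
  refine h.congr' ?_
  filter_upwards [self_mem_nhdsWithin] with x hx
  simp [slope_def_field]

lemma cosh_div_sq_tendsto :
    Tendsto (fun x : ℝ => (Real.cosh x - 1) / x ^ 2) (𝓝[≠] 0) (𝓝 (1 / 2)) := by
  have h1 : Tendsto (fun x : ℝ => x / 2) (𝓝[≠] (0 : ℝ)) (𝓝[≠] 0) := by
    have h0 : Tendsto (fun x : ℝ => x / 2) (𝓝 (0:ℝ)) (𝓝 0) := by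
      simpa using (continuous_id.div_const (2:ℝ)).tendsto (0:ℝ)
    refine tendsto_nhdsWithin_of_tendsto_nhds_of_eventually_within _
      (h0.mono_left nhdsWithin_le_nhds) ?_
    filter_upwards [self_mem_nhdsWithin] with x hx
    simpa using div_ne_zero hx two_ne_zero
  have h2 := sinh_div_tendsto.comp h1
  have h3 : Tendsto (fun x : ℝ => (Real.sinh (x / 2) / (x / 2)) ^ 2 / 2)
      (𝓝[≠] (0:ℝ)) (𝓝 (1 / 2)) := by
    have := (h2.pow 2).div_const 2
    simpa using this
  refine h3.congr' ?_
  filter_upwards [self_mem_nhdsWithin] with x hx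
  have hc : Real.cosh x = 2 * Real.sinh (x / 2) ^ 2 + 1 := by
    have := Real.cosh_two_mul (x / 2)
    have hsq := Real.cosh_sq (x / 2)
    rw [show 2 * (x / 2) = x by ring] at this
    rw [this, hsq]; ring
  rw [hc]
  field_simp
  ring

/-- Near a zero `σ₀` of the electric field profile `ζ`, the Jacobian determinant of the
co-moving coordinate transformation tends to `1 + (1/2) ζ'(σ₀) τ²` as `σ → σ₀`. -/
theorem wall_of_charge_jacobian_limit_at_field_zero
    (ζ : ℝ → ℝ) (hζ : ContDiff ℝ 1 ζ) (σ₀ : ℝ) (hζσ₀ : ζ σ₀ = 0)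
    (hne : ∀ᶠ σ in 𝓝[≠] σ₀, ζ σ ≠ 0) (τ : ℝ) :
    Tendsto
      (fun σ => -(deriv ζ σ) / (ζ σ) ^ 2 +
        Real.cosh (ζ σ * τ) * (1 + deriv ζ σ / (ζ σ) ^ 2))
      (𝓝[≠] σ₀) (𝓝 (1 + (1 / 2) * deriv ζ σ₀ * τ ^ 2)) := by
  rcases eq_or_ne τ 0 with rfl | hτ
  · have : (fun σ => -(deriv ζ σ) / (ζ σ) ^ 2 +
        Real.cosh (ζ σ * 0) * (1 + deriv ζ σ / (ζ σ) ^ 2)) = fun _ => 1 := by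
      funext σ; simp [Real.cosh_zero]; ring
    rw [this]
    simp only [one_div]
    exact tendsto_const_nhds.congr (fun _ => by ring)
  · have hz : Tendsto ζ (𝓝[≠] σ₀) (𝓝 0) := by
      have := hζ.continuous.continuousAt (x := σ₀)
      rw [ContinuousAt, hζσ₀] at this
      exact this.mono_left nhdsWithin_le_nhds
    have hzt : Tendsto (fun σ => ζ σ * τ) (𝓝[≠] σ₀) (𝓝[≠] 0) := by
      refine tendsto_nhdsWithin_of_tendsto_nhds_of_eventually_within _
        (by simpa using hz.mul_const τ) ?_
      filter_upwards [hne] with σ hσ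
      simpa using mul_ne_zero hσ hτ
    have hg := cosh_div_sq_tendsto.comp hzt
    have hcosh : Tendsto (fun σ => Real.cosh (ζ σ * τ)) (𝓝[≠] σ₀) (𝓝 1) := by
      have := (Real.continuous_cosh.tendsto 0).comp (by simpa using hz.mul_const τ)
      simpa [Function.comp_def] using this
    have hd : Tendsto (deriv ζ) (𝓝[≠] σ₀) (𝓝 (deriv ζ σ₀)) :=
      ((hζ.continuous_deriv le_rfl).continuousAt).tendsto.mono_left nhdsWithin_le_nhds
    have hmain : Tendsto (fun σ => Real.cosh (ζ σ * τ) +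
        deriv ζ σ * τ ^ 2 * ((Real.cosh (ζ σ * τ) - 1) / (ζ σ * τ) ^ 2))
        (𝓝[≠] σ₀) (𝓝 (1 + deriv ζ σ₀ * τ ^ 2 * (1 / 2))) :=
      hcosh.add (((hd.mul_const (τ ^ 2)).mul hg))
    have heq : (1 : ℝ) + deriv ζ σ₀ * τ ^ 2 * (1 / 2) =
        1 + (1 / 2) * deriv ζ σ₀ * τ ^ 2 := by ring
    rw [heq] at hmain
    refine hmain.congr' ?_
    filter_upwards [hne] with σ hσ
    have hζ2 : (ζ σ) ^ 2 ≠ 0 := pow_ne_zero _ hσ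
    field_simp
    ring
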